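/- The 7-dimensional real Lie algebras g₅¹ ⊕ aff(ℝ) and g₅² ⊕ aff(ℝ) are not isomorphic, but their complexifications are isomorphic as complex Lie algebras. -/
import Mathlib


open Module
open scoped TensorProduct

/-- Structure constants (for `i < j`) of `g₅¹`: `[X₁,X₂]=X₃`, `[X₄,X₁]=X₁`, `[X₄,X₂]=X₂`,
`[X₄,X₃]=2X₃`, `[X₅,X₁]=X₁`, `[X₅,X₂]=−X₂` (1-indexed), all other brackets zero. -/
def c51 (i j : Fin 5) : Fin 5 → ℝ :=
  if (i, j) = (0, 1) then ![0, 0, 1, 0, 0]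
  else if (i, j) = (0, 3) then ![-1, 0, 0, 0, 0]
  else if (i, j) = (1, 3) then ![0, -1, 0, 0, 0]
  else if (i, j) = (2, 3) then ![0, 0, -2, 0, 0]
  else if (i, j) = (0, 4) then ![-1, 0, 0, 0, 0]
  else if (i, j) = (1, 4) then ![0, 1, 0, 0, 0]
  else 0

/-- Structure constants (for `i < j`) of `g₅²`: `[X₁,X₂]=X₃`, `[X₄,X₁]=X₁`, `[X₄,X₂]=X₂`,
`[X₄,X₃]=2X₃`, `[X₅,X₁]=−X₂`, `[X₅,X₂]=X₁` (1-indexed), all other brackets zero. -/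
def c52 (i j : Fin 5) : Fin 5 → ℝ :=
  if (i, j) = (0, 1) then ![0, 0, 1, 0, 0]
  else if (i, j) = (0, 3) then ![-1, 0, 0, 0, 0]
  else if (i, j) = (1, 3) then ![0, -1, 0, 0, 0]
  else if (i, j) = (2, 3) then ![0, 0, -2, 0, 0]
  else if (i, j) = (0, 4) then ![0, 1, 0, 0, 0]
  else if (i, j) = (1, 4) then ![-1, 0, 0, 0, 0]
  else 0

def q51 (i j k : Fin 5) : ℤ :=
  if (i, j) = (0, 1) then ![0, 0, 1, 0, 0] k
  else if (i, j) = (0, 3) then ![-1, 0, 0, 0, 0] k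
  else if (i, j) = (1, 3) then ![0, -1, 0, 0, 0] k
  else if (i, j) = (2, 3) then ![0, 0, -2, 0, 0] k
  else if (i, j) = (0, 4) then ![-1, 0, 0, 0, 0] k
  else if (i, j) = (1, 4) then ![0, 1, 0, 0, 0] k
  else 0

def q52 (i j k : Fin 5) : ℤ :=
  if (i, j) = (0, 1) then ![0, 0, 1, 0, 0] k
  else if (i, j) = (0, 3) then ![-1, 0, 0, 0, 0] k
  else if (i, j) = (1, 3) then ![0, -1, 0, 0, 0] k
  else if (i, j) = (2, 3) then ![0, 0, -2, 0, 0] k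
  else if (i, j) = (0, 4) then ![0, 1, 0, 0, 0] k
  else if (i, j) = (1, 4) then ![-1, 0, 0, 0, 0] k
  else 0

lemma q51_cast (i j k : Fin 5) : ((q51 i j k : ℤ) : ℝ) = c51 i j k := by
  rw [q51, c51]
  simp only [apply_ite (fun f : Fin 5 → ℝ => f k), Pi.zero_apply]
  split_ifs <;> fin_cases k <;> norm_num

lemma q52_cast (i j k : Fin 5) : ((q52 i j k : ℤ) : ℝ) = c52 i j k := by
  rw [q52, c52]
  simp only [apply_ite (fun f : Fin 5 → ℝ => f k), Pi.zero_apply]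
  split_ifs <;> fin_cases k <;> norm_num

/-- Full antisymmetrized structure constants on `Fin 5 ⊕ Bool`. -/
def sc (q : Fin 5 → Fin 5 → Fin 5 → ℤ) : Fin 5 ⊕ Bool → Fin 5 ⊕ Bool → Fin 5 ⊕ Bool → ℤ
  | .inl i, .inl j, .inl k => if i < j then q i j k else if j < i then -q j i k else 0
  | .inr a, .inr b, .inr c =>
      (if a = false ∧ b = true ∧ c = true then 1 else 0)
        - (if a = true ∧ b = false ∧ c = true then 1 else 0)
  | _, _, _ => 0

def Eform (q : Fin 5 → Fin 5 → Fin 5 → ℤ) (i j : Fin 5 ⊕ Bool) : ℤ :=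
  ∑ k, ∑ l, sc q j k l * sc q i l k

def Kmat (i j : Fin 5 ⊕ Bool) : ℤ :=
  if i = .inl 3 ∧ j = .inl 3 then 6 else if i = .inl 4 ∧ j = .inl 4 then 2
    else if i = .inr false ∧ j = .inr false then 1 else 0

lemma E1_eval : ∀ i j, Eform q51 i j = Kmat i j := by
  intro i j
  simp only [Eform, Fintype.sum_sum_type, Fin.sum_univ_five, Fintype.sum_bool]
  revert i j
  decide

lemma E2_val : Eform q52 (.inl 4) (.inl 4) = -2 := by
  simp only [Eform, Fintype.sum_sum_type, Fin.sum_univ_five, Fintype.sum_bool]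
  decide

variable {g : Type} [LieRing g] [LieAlgebra ℝ g]

lemma table (b : Basis (Fin 5 ⊕ Bool) ℝ g) (q : Fin 5 → Fin 5 → Fin 5 → ℤ)
    (c : Fin 5 → Fin 5 → Fin 5 → ℝ)
    (hq : ∀ i j k, ((q i j k : ℤ) : ℝ) = c i j k)
    (h : ∀ i j : Fin 5, i < j →
      ⁅b (Sum.inl i), b (Sum.inl j)⁆ = ∑ k, c i j k • b (Sum.inl k))
    (h' : ⁅b (Sum.inr false), b (Sum.inr true)⁆ = b (Sum.inr true))
    (h'' : ∀ (i : Fin 5) (x : Bool), ⁅b (Sum.inl i), b (Sum.inr x)⁆ = 0) :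
    ∀ i j, ⁅b i, b j⁆ = ∑ k, ((sc q i j k : ℤ) : ℝ) • b k := by
  have hsplit : ∀ (f : Fin 5 ⊕ Bool → g), (∑ k, f k) =
      (∑ k : Fin 5, f (Sum.inl k)) + (f (Sum.inr false) + f (Sum.inr true)) := by
    intro f
    rw [Fintype.sum_sum_type]
    congr 1
    simp [Fintype.sum_bool, add_comm]
  rintro (i | x) (j | y)
  · rcases lt_trichotomy i j with hij | rfl | hij
    · rw [h i j hij, hsplit]
      simp only [sc, if_pos hij, hq]
      simp
    · simp only [lie_self, hsplit, sc, lt_irrefl, if_false]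
      simp
    · rw [← lie_skew, h j i hij, hsplit]
      simp only [sc, if_neg (not_lt.2 hij.le), if_pos hij, hq]
      push_cast
      simp [neg_smul, hq]
  · rw [h'' i y, hsplit]
    simp [sc]
  · rw [← lie_skew, h'' j x, hsplit]
    simp [sc]
  · rw [hsplit]
    cases x <;> cases y
    · simp [sc]
    · rw [h']; simp [sc]
    · rw [← lie_skew, h']; simp [sc]
    · simp [sc]

open Module in
lemma killing_eq {ι : Type} [Fintype ι] [DecidableEq ι]
    (b : Basis ι ℝ g) (S : ι → ι → ι → ℝ)
    (hb : ∀ i j, ⁅b i, b j⁆ = ∑ k, S i j k • b k) (i j : ι) :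
    killingForm ℝ g (b i) (b j) = ∑ k, ∑ l, S j k l * S i l k := by
  rw [killingForm_apply_apply, LinearMap.trace_eq_matrix_trace ℝ b, Matrix.trace]
  refine Finset.sum_congr rfl fun k _ => ?_
  rw [Matrix.diag, LinearMap.toMatrix_apply]
  have step : (LieAlgebra.ad ℝ g (b i) ∘ₗ LieAlgebra.ad ℝ g (b j)) (b k)
      = ∑ l, S j k l • ∑ m, S i l m • b m := by
    rw [LinearMap.comp_apply]
    have h1 : LieAlgebra.ad ℝ g (b j) (b k) = ∑ l, S j k l • b l := by
      rw [LieAlgebra.ad_apply, hb j k]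
    rw [h1, map_sum]
    refine Finset.sum_congr rfl fun l _ => ?_
    rw [map_smul, LieAlgebra.ad_apply, hb i l]
  rw [step]
  simp only [map_sum, map_smul, Finsupp.coe_finset_sum, Finset.sum_apply, Finsupp.coe_smul,
    Pi.smul_apply, Basis.repr_self, Finsupp.single_apply, smul_eq_mul, mul_ite, mul_one,
    mul_zero, Finset.sum_ite_eq', Finset.mem_univ, if_true]

lemma killing1 (b : Basis (Fin 5 ⊕ Bool) ℝ g)
    (hb : ∀ i j, ⁅b i, b j⁆ = ∑ k, ((sc q51 i j k : ℤ) : ℝ) • b k) (i j : Fin 5 ⊕ Bool) :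
    killingForm ℝ g (b i) (b j) = ((Kmat i j : ℤ) : ℝ) := by
  rw [killing_eq b _ hb i j, ← E1_eval i j, Eform]
  push_cast
  rfl

lemma killing1_nonneg (b : Basis (Fin 5 ⊕ Bool) ℝ g)
    (hb : ∀ i j, ⁅b i, b j⁆ = ∑ k, ((sc q51 i j k : ℤ) : ℝ) • b k) (x : g) :
    0 ≤ killingForm ℝ g x x := by
  set c := b.repr x with hc
  have hx : ∑ i, c i • b i = x := b.sum_repr x
  have key : killingForm ℝ g x x
      = ∑ i, c i * ∑ j, c j * ((Kmat j i : ℤ) : ℝ) := by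
    conv_lhs => rw [← hx]
    simp only [map_sum, LinearMap.sum_apply, map_smul, LinearMap.smul_apply, smul_eq_mul,
      killing1 b hb]
  rw [key]
  have : (∑ i, c i * ∑ j, c j * ((Kmat j i : ℤ) : ℝ))
      = 6 * (c (.inl 3))^2 + 2 * (c (.inl 4))^2 + (c (.inr false))^2 := by
    simp only [Fintype.sum_sum_type, Fin.sum_univ_five, Fintype.sum_bool, Kmat]
    simp (config := { decide := true }) only [Sum.inl.injEq, Sum.inr.injEq, and_true, and_false,
      if_true, if_false, reduceIte, Int.cast_ofNat, Int.cast_zero, Int.cast_one]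
    ring
  rw [this]
  positivity

-- generic: build a Lie algebra equivalence from matching structure constants
lemma equiv_of_tables {R V W ι : Type} [CommRing R] [LieRing V] [LieAlgebra R V]
    [LieRing W] [LieAlgebra R W] [Fintype ι] [DecidableEq ι]
    (B : Basis ι R V) (C : Basis ι R W) (S T : ι → ι → ι → R) (P Q : ι → ι → R)
    (hS : ∀ i j, ⁅B i, B j⁆ = ∑ k, S i j k • B k)
    (hT : ∀ i j, ⁅C i, C j⁆ = ∑ k, T i j k • C k)
    (hPQ : ∀ i j, ∑ k, P i k * Q k j = if i = j then 1 else 0)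
    (hQP : ∀ i j, ∑ k, Q i k * P k j = if i = j then 1 else 0)
    (hcompat : ∀ i j m, (∑ k, S i j k * P k m) = ∑ k, ∑ l, P i k * (P j l * T k l m)) :
    Nonempty (V ≃ₗ⁅R⁆ W) := by
  have lie_sum_right : ∀ (x : W) (f : ι → W), ⁅x, ∑ k, f k⁆ = ∑ k, ⁅x, f k⁆ := by
    intro x f
    simpa only [LieAlgebra.ad_apply] using map_sum (LieAlgebra.ad R W x) f Finset.univ
  have lie_sum_left : ∀ (y : W) (f : ι → W), ⁅∑ k, f k, y⁆ = ∑ k, ⁅f k, y⁆ := by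
    intro y f
    calc ⁅∑ k, f k, y⁆ = -⁅y, ∑ k, f k⁆ := (lie_skew _ _).symm
      _ = -∑ k, ⁅y, f k⁆ := by rw [lie_sum_right]
      _ = ∑ k, ⁅f k, y⁆ := by
            rw [← Finset.sum_neg_distrib]
            exact Finset.sum_congr rfl fun k _ => lie_skew _ _
  set F : V →ₗ[R] W := B.constr R fun i => ∑ k, P i k • C k with hFdef
  set G : W →ₗ[R] V := C.constr R fun i => ∑ k, Q i k • B k with hGdef
  have hF : ∀ i, F (B i) = ∑ k, P i k • C k := fun i => B.constr_basis R _ i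
  have hG : ∀ i, G (C i) = ∑ k, Q i k • B k := fun i => C.constr_basis R _ i
  have hGF : ∀ x, G (F x) = x := by
    have : G ∘ₗ F = LinearMap.id := by
      apply B.ext
      intro i
      rw [LinearMap.comp_apply, hF, map_sum, LinearMap.id_apply]
      simp only [map_smul, hG, Finset.smul_sum, smul_smul]
      rw [Finset.sum_comm]
      simp only [← Finset.sum_smul, hPQ]
      simp [ite_smul]
    intro x
    have := DFunLike.congr_fun this x
    simpa using this
  have hFG : ∀ y, F (G y) = y := by
    have : F ∘ₗ G = LinearMap.id := by
      apply C.ext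
      intro i
      rw [LinearMap.comp_apply, hG, map_sum, LinearMap.id_apply]
      simp only [map_smul, hF, Finset.smul_sum, smul_smul]
      rw [Finset.sum_comm]
      simp only [← Finset.sum_smul, hQP]
      simp [ite_smul]
    intro y
    have := DFunLike.congr_fun this y
    simpa using this
  have key : ∀ i j, F ⁅B i, B j⁆ = ⁅F (B i), F (B j)⁆ := by
    intro i j
    have lhs : F ⁅B i, B j⁆ = ∑ m, (∑ k, S i j k * P k m) • C m := by
      rw [hS, map_sum]
      simp only [map_smul, hF, Finset.smul_sum, smul_smul]
      rw [Finset.sum_comm]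
      simp only [← Finset.sum_smul]
    have rhs : ⁅F (B i), F (B j)⁆ = ∑ m, (∑ k, ∑ l, P i k * (P j l * T k l m)) • C m := by
      rw [hF i, hF j, lie_sum_left]
      have step1 : ∀ k, ⁅P i k • C k, ∑ l, P j l • C l⁆
          = ∑ m, (∑ l, P i k * (P j l * T k l m)) • C m := by
        intro k
        rw [smul_lie, lie_sum_right]
        simp only [lie_smul, hT, Finset.smul_sum, smul_smul]
        rw [Finset.sum_comm]
        simp only [← Finset.sum_smul]
      simp only [step1]
      rw [Finset.sum_comm]
      simp only [← Finset.sum_smul]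
    rw [lhs, rhs]
    refine Finset.sum_congr rfl fun m _ => ?_
    rw [hcompat i j m]
  have hlie : ∀ x y, F ⁅x, y⁆ = ⁅F x, F y⁆ := by
    intro x y
    have hx := B.sum_repr x
    have hy := B.sum_repr y
    conv_lhs => rw [← hx, ← hy]
    conv_rhs => rw [← hx, ← hy]
    have lie_sum_rightV : ∀ (x : V) (f : ι → V), ⁅x, ∑ k, f k⁆ = ∑ k, ⁅x, f k⁆ := by
      intro z f
      simpa only [LieAlgebra.ad_apply] using map_sum (LieAlgebra.ad R V z) f Finset.univ
    have lie_sum_leftV : ∀ (y : V) (f : ι → V), ⁅∑ k, f k, y⁆ = ∑ k, ⁅f k, y⁆ := by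
      intro z f
      calc ⁅∑ k, f k, z⁆ = -⁅z, ∑ k, f k⁆ := (lie_skew _ _).symm
        _ = -∑ k, ⁅z, f k⁆ := by rw [lie_sum_rightV]
        _ = ∑ k, ⁅f k, z⁆ := by
              rw [← Finset.sum_neg_distrib]
              exact Finset.sum_congr rfl fun k _ => lie_skew _ _
    simp only [map_sum, map_smul, lie_sum_leftV, lie_sum_rightV, smul_lie, lie_smul,
      lie_sum_left, lie_sum_right, key]
  exact ⟨{ toLinearMap := F, map_lie' := fun {x y} => hlie x y, invFun := G,
           left_inv := hGF, right_inv := hFG }⟩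

/-- Real part (times 1) of the change of basis matrix. -/
def PR : Fin 5 ⊕ Bool → Fin 5 ⊕ Bool → ℤ
  | .inl 0, .inl 0 => 1
  | .inl 1, .inl 0 => 1
  | .inl 3, .inl 3 => 1
  | .inr a, .inr b => if a = b then 1 else 0
  | _, _ => 0

/-- Imaginary part of the change of basis matrix. -/
def PI : Fin 5 ⊕ Bool → Fin 5 ⊕ Bool → ℤ
  | .inl 0, .inl 1 => 1
  | .inl 1, .inl 1 => -1
  | .inl 2, .inl 2 => -2
  | .inl 4, .inl 4 => -1
  | _, _ => 0

/-- Real part of twice the inverse matrix. -/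
def QR : Fin 5 ⊕ Bool → Fin 5 ⊕ Bool → ℤ
  | .inl 0, .inl 0 => 1
  | .inl 0, .inl 1 => 1
  | .inl 3, .inl 3 => 2
  | .inr a, .inr b => if a = b then 2 else 0
  | _, _ => 0

/-- Imaginary part of twice the inverse matrix. -/
def QI : Fin 5 ⊕ Bool → Fin 5 ⊕ Bool → ℤ
  | .inl 1, .inl 0 => -1
  | .inl 1, .inl 1 => 1
  | .inl 2, .inl 2 => 1
  | .inl 4, .inl 4 => 2
  | _, _ => 0

lemma D1 : ∀ i j, (∑ k, (PR i k * QR k j - PI i k * QI k j)) = if i = j then 2 else 0 := by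
  intro i j
  simp only [Fintype.sum_sum_type, Fin.sum_univ_five, Fintype.sum_bool]
  revert i j
  decide

lemma D2 : ∀ i j, (∑ k, (PR i k * QI k j + PI i k * QR k j)) = 0 := by
  intro i j
  simp only [Fintype.sum_sum_type, Fin.sum_univ_five, Fintype.sum_bool]
  revert i j
  decide

lemma D3 : ∀ i j, (∑ k, (QR i k * PR k j - QI i k * PI k j)) = if i = j then 2 else 0 := by
  intro i j
  simp only [Fintype.sum_sum_type, Fin.sum_univ_five, Fintype.sum_bool]
  revert i j
  decide

lemma D4 : ∀ i j, (∑ k, (QR i k * PI k j + QI i k * PR k j)) = 0 := by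
  intro i j
  simp only [Fintype.sum_sum_type, Fin.sum_univ_five, Fintype.sum_bool]
  revert i j
  decide

set_option maxHeartbeats 2000000 in
lemma D5 : ∀ i j m, (∑ k, sc q51 i j k * PR k m)
    = ∑ k, ∑ l, ((PR i k * PR j l - PI i k * PI j l) * sc q52 k l m) := by
  intro i j m
  simp only [Fintype.sum_sum_type, Fin.sum_univ_five, Fintype.sum_bool]
  revert i j m
  decide

set_option maxHeartbeats 2000000 in
lemma D6 : ∀ i j m, (∑ k, sc q51 i j k * PI k m)
    = ∑ k, ∑ l, ((PR i k * PI j l + PI i k * PR j l) * sc q52 k l m) := by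
  intro i j m
  simp only [Fintype.sum_sum_type, Fin.sum_univ_five, Fintype.sum_bool]
  revert i j m
  decide

noncomputable def Pmat (i j : Fin 5 ⊕ Bool) : ℂ := (PR i j : ℂ) + (PI i j : ℂ) * Complex.I
noncomputable def Qmat (i j : Fin 5 ⊕ Bool) : ℂ := ((QR i j : ℂ) + (QI i j : ℂ) * Complex.I) / 2

lemma sum_pair {ι : Type} [Fintype ι] (a b : ι → ℤ) :
    ∑ k, ((a k : ℂ) + (b k : ℂ) * Complex.I)
      = ((∑ k, a k : ℤ) : ℂ) + ((∑ k, b k : ℤ) : ℂ) * Complex.I := by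
  push_cast
  rw [Finset.sum_add_distrib, Finset.sum_mul]

lemma hPQ : ∀ i j, ∑ k, Pmat i k * Qmat k j = if i = j then 1 else 0 := by
  intro i j
  have e1 : ∀ k, Pmat i k * Qmat k j
      = (((PR i k * QR k j - PI i k * QI k j : ℤ) : ℂ)
          + ((PR i k * QI k j + PI i k * QR k j : ℤ) : ℂ) * Complex.I) / 2 := by
    intro k
    simp only [Pmat, Qmat]
    push_cast
    linear_combination ((PI i k : ℂ) * (QI k j : ℂ) / 2) * Complex.I_sq
  rw [Finset.sum_congr rfl fun k _ => e1 k, ← Finset.sum_div, sum_pair, D1, D2]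
  split_ifs <;> norm_num

lemma hQP : ∀ i j, ∑ k, Qmat i k * Pmat k j = if i = j then 1 else 0 := by
  intro i j
  have e1 : ∀ k, Qmat i k * Pmat k j
      = (((QR i k * PR k j - QI i k * PI k j : ℤ) : ℂ)
          + ((QR i k * PI k j + QI i k * PR k j : ℤ) : ℂ) * Complex.I) / 2 := by
    intro k
    simp only [Pmat, Qmat]
    push_cast
    linear_combination ((QI i k : ℂ) * (PI k j : ℂ) / 2) * Complex.I_sq
  rw [Finset.sum_congr rfl fun k _ => e1 k, ← Finset.sum_div, sum_pair, D3, D4]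
  split_ifs <;> norm_num

lemma hcompat : ∀ i j m, (∑ k, ((sc q51 i j k : ℤ) : ℂ) * Pmat k m)
    = ∑ k, ∑ l, Pmat i k * (Pmat j l * ((sc q52 k l m : ℤ) : ℂ)) := by
  intro i j m
  have e1 : ∀ k, ((sc q51 i j k : ℤ) : ℂ) * Pmat k m
      = ((sc q51 i j k * PR k m : ℤ) : ℂ) + ((sc q51 i j k * PI k m : ℤ) : ℂ) * Complex.I := by
    intro k
    simp only [Pmat]
    push_cast
    ring
  have e2 : ∀ k l, Pmat i k * (Pmat j l * ((sc q52 k l m : ℤ) : ℂ))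
      = (((PR i k * PR j l - PI i k * PI j l) * sc q52 k l m : ℤ) : ℂ)
        + (((PR i k * PI j l + PI i k * PR j l) * sc q52 k l m : ℤ) : ℂ) * Complex.I := by
    intro k l
    simp only [Pmat]
    push_cast
    linear_combination ((PI i k : ℂ) * (PI j l : ℂ) * ((sc q52 k l m : ℤ) : ℂ)) * Complex.I_sq
  have e3 : ∀ k, (∑ l, Pmat i k * (Pmat j l * ((sc q52 k l m : ℤ) : ℂ)))
      = ((∑ l, (PR i k * PR j l - PI i k * PI j l) * sc q52 k l m : ℤ) : ℂ)
        + ((∑ l, (PR i k * PI j l + PI i k * PR j l) * sc q52 k l m : ℤ) : ℂ) * Complex.I := by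
    intro k
    rw [Finset.sum_congr rfl fun l _ => e2 k l, sum_pair]
  rw [Finset.sum_congr rfl fun k _ => e1 k, sum_pair, D5, D6,
    Finset.sum_congr rfl fun k _ => e3 k, sum_pair]

lemma tableC {g : Type} [LieRing g] [LieAlgebra ℝ g] (b : Basis (Fin 5 ⊕ Bool) ℝ g)
    (q : Fin 5 → Fin 5 → Fin 5 → ℤ)
    (hb : ∀ i j, ⁅b i, b j⁆ = ∑ k, ((sc q i j k : ℤ) : ℝ) • b k) :
    ∀ i j, ⁅(b.baseChange ℂ) i, (b.baseChange ℂ) j⁆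
      = ∑ k, ((sc q i j k : ℤ) : ℂ) • (b.baseChange ℂ) k := by
  intro i j
  rw [Basis.baseChange_apply, Basis.baseChange_apply,
    LieAlgebra.ExtendScalars.bracket_tmul, one_mul, hb i j, TensorProduct.tmul_sum]
  refine Finset.sum_congr rfl fun k _ => ?_
  rw [TensorProduct.tmul_smul, Basis.baseChange_apply,
    ← algebraMap_smul (R := ℝ) ℂ ((sc q i j k : ℤ) : ℝ) ((1 : ℂ) ⊗ₜ[ℝ] b k),
    map_intCast (algebraMap ℝ ℂ) (sc q i j k)]

lemma complex_iso {g₁ : Type} [LieRing g₁] [LieAlgebra ℝ g₁] (b₁ : Basis (Fin 5 ⊕ Bool) ℝ g₁)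
    {g₂ : Type} [LieRing g₂] [LieAlgebra ℝ g₂] (b₂ : Basis (Fin 5 ⊕ Bool) ℝ g₂)
    (t1 : ∀ i j, ⁅b₁ i, b₁ j⁆ = ∑ k, ((sc q51 i j k : ℤ) : ℝ) • b₁ k)
    (t2 : ∀ i j, ⁅b₂ i, b₂ j⁆ = ∑ k, ((sc q52 i j k : ℤ) : ℝ) • b₂ k) :
    Nonempty ((ℂ ⊗[ℝ] g₁) ≃ₗ⁅ℂ⁆ (ℂ ⊗[ℝ] g₂)) :=
  equiv_of_tables (b₁.baseChange ℂ) (b₂.baseChange ℂ)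
    (fun i j k => ((sc q51 i j k : ℤ) : ℂ)) (fun i j k => ((sc q52 i j k : ℤ) : ℂ))
    Pmat Qmat (tableC b₁ q51 t1) (tableC b₂ q52 t2) hPQ hQP hcompat

/-- `g₅¹ ⊕ aff(ℝ)` and `g₅² ⊕ aff(ℝ)`: bases indexed by `Fin 5 ⊕ Bool`, where `Sum.inl`
carries the `g₅ⁱ` relations, `Sum.inr false = T`, `Sum.inr true = U` with `⁅T, U⁆ = U`,
and the two summands commute. -/
theorem g51_aff_vs_g52_aff
    {g₁ : Type} [LieRing g₁] [LieAlgebra ℝ g₁] (b₁ : Basis (Fin 5 ⊕ Bool) ℝ g₁)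
    (h₁ : ∀ i j : Fin 5, i < j →
      ⁅b₁ (Sum.inl i), b₁ (Sum.inl j)⁆ = ∑ k, c51 i j k • b₁ (Sum.inl k))
    (h₁' : ⁅b₁ (Sum.inr false), b₁ (Sum.inr true)⁆ = b₁ (Sum.inr true))
    (h₁'' : ∀ (i : Fin 5) (x : Bool), ⁅b₁ (Sum.inl i), b₁ (Sum.inr x)⁆ = 0)
    {g₂ : Type} [LieRing g₂] [LieAlgebra ℝ g₂] (b₂ : Basis (Fin 5 ⊕ Bool) ℝ g₂)
    (h₂ : ∀ i j : Fin 5, i < j →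
      ⁅b₂ (Sum.inl i), b₂ (Sum.inl j)⁆ = ∑ k, c52 i j k • b₂ (Sum.inl k))
    (h₂' : ⁅b₂ (Sum.inr false), b₂ (Sum.inr true)⁆ = b₂ (Sum.inr true))
    (h₂'' : ∀ (i : Fin 5) (x : Bool), ⁅b₂ (Sum.inl i), b₂ (Sum.inr x)⁆ = 0) :
    IsEmpty (g₁ ≃ₗ⁅ℝ⁆ g₂) ∧ Nonempty ((ℂ ⊗[ℝ] g₁) ≃ₗ⁅ℂ⁆ (ℂ ⊗[ℝ] g₂)) := by
  have t1 := table b₁ q51 c51 q51_cast h₁ h₁' h₁''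
  have t2 := table b₂ q52 c52 q52_cast h₂ h₂' h₂''
  constructor
  · refine ⟨fun e => ?_⟩
    have hneg : killingForm ℝ g₂ (b₂ (Sum.inl 4)) (b₂ (Sum.inl 4)) = -2 := by
      rw [killing_eq b₂ _ t2]
      have : (∑ k, ∑ l, ((sc q52 (Sum.inl 4) k l : ℤ) : ℝ) * ((sc q52 (Sum.inl 4) l k : ℤ) : ℝ))
          = ((Eform q52 (Sum.inl 4) (Sum.inl 4) : ℤ) : ℝ) := by
        rw [Eform]
        push_cast
        rfl
      rw [this, E2_val]
      norm_num
    have hpos := killing1_nonneg b₁ t1 (e.symm (b₂ (Sum.inl 4)))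
    have heq := LieAlgebra.killingForm_of_equiv_apply (R := ℝ) e
      (e.symm (b₂ (Sum.inl 4))) (e.symm (b₂ (Sum.inl 4)))
    rw [LieEquiv.apply_symm_apply] at heq
    rw [hneg] at heq
    linarith
  · exact complex_iso b₁ b₂ t1 t2
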